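/- For every k ≥ 2, S_k = A_k B_k A_k A_k, where A_k = S_{k-2} and B_k = Â_k (A_k with last character flipped). -/
import Mathlib


/-- The morphism φ: a ↦ ab, b ↦ aa, with `false = a`, `true = b`. -/
def pdPhi (c : Bool) : List Bool := if c then [false, false] else [false, true]

/-- The k-th period-doubling sequence. -/
def pd : ℕ → List Bool
  | 0 => [false]
  | k + 1 => (pd k).flatMap pdPhi

/-- `hat w` : `w` with its last character flipped. -/
def hat (w : List Bool) : List Bool := w.dropLast ++ (w.getLast?.map Bool.not).toList

lemma hat_concat (z : List Bool) (c : Bool) : hat (z ++ [c]) = z ++ [!c] := by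
  simp [hat]

lemma hat_hat (w : List Bool) (hw : w ≠ []) : hat (hat w) = w := by
  rcases (List.eq_nil_or_concat w) with h | ⟨z, c, rfl⟩
  all_goals try simp only [List.concat_eq_append] at *
  · exact absurd h hw
  · simp [hat_concat]

lemma hat_append (x y : List Bool) (hy : y ≠ []) : hat (x ++ y) = x ++ hat y := by
  rcases (List.eq_nil_or_concat y) with h | ⟨z, c, rfl⟩
  all_goals try simp only [List.concat_eq_append] at *
  · exact absurd h hy
  · rw [← List.append_assoc, hat_concat, hat_concat, List.append_assoc]

lemma hat_flatMap (w : List Bool) (hw : w ≠ []) :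
    hat (w.flatMap pdPhi) = (hat w).flatMap pdPhi := by
  rcases (List.eq_nil_or_concat w) with h | ⟨z, c, rfl⟩
  all_goals try simp only [List.concat_eq_append] at *
  · exact absurd h hw
  · rw [hat_concat, List.flatMap_append, List.flatMap_append,
      hat_append _ _ (by cases c <;> simp [pdPhi])]
    congr 1
    cases c <;> simp [pdPhi, hat]

lemma hat_ne_nil (w : List Bool) (hw : w ≠ []) : hat w ≠ [] := by
  rcases (List.eq_nil_or_concat w) with h | ⟨z, c, rfl⟩
  all_goals try simp only [List.concat_eq_append] at *
  · exact absurd h hw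
  · rw [hat_concat]; simp

lemma pd_ne_nil (k : ℕ) : pd k ≠ [] := by
  induction k with
  | zero => simp [pd]
  | succ n ih =>
    rcases (List.eq_nil_or_concat (pd n)) with h | ⟨z, c, hz⟩
    · exact absurd h ih
    · show (pd n).flatMap pdPhi ≠ []
      rw [hz, List.concat_eq_append, List.flatMap_append]
      cases c <;> simp [pdPhi]

lemma pd_succ (k : ℕ) : pd (k + 1) = pd k ++ hat (pd k) := by
  induction k with
  | zero => decide
  | succ n ih =>
    show (pd (n+1)).flatMap pdPhi = pd (n+1) ++ hat (pd (n+1))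
    conv_lhs => rw [ih]
    rw [List.flatMap_append, ← hat_flatMap _ (pd_ne_nil n)]
    rfl

theorem pd_ABAA (k : ℕ) (hk : 2 ≤ k) :
    pd k = pd (k - 2) ++ hat (pd (k - 2)) ++ pd (k - 2) ++ pd (k - 2) := by
  obtain ⟨m, rfl⟩ : ∃ m, k = m + 2 := ⟨k - 2, by omega⟩
  have h2 : m + 2 - 2 = m := by omega
  rw [h2, pd_succ, pd_succ, hat_append _ _ (hat_ne_nil _ (pd_ne_nil m)),
    hat_hat _ (pd_ne_nil m)]
  simp [List.append_assoc]
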